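/- If the p_k are all equal to a fixed probability measure p on the positive integers (i.e. the difference-Silvester symbols are independent and identically distributed), then the probability measure μ_ξ is singular with respect to Lebesgue measure: μ_ξ ⊥ λ. -/

import Mathlib

open MeasureTheory Set
open Filter Pointwise

namespace ROE

/-- The `x`-sequence of the restricted Oppenheim algorithm applied to `x`:
index `k` corresponds to the paper's `x_{k+1}`, and `a k`, `b k` correspond to the paper's
`a_{k+1}`, `b_{k+1}`.  So `X a b x 0 = x₁ = x` and
`x_{k+2} = (b_{k+1}(d_{k+1})/a_{k+1}(d_{k+1})) · (x_{k+1} - 1/d_{k+1})`. -/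
noncomputable def X (a b : ℕ → ℕ → ℕ) (x : ℝ) : ℕ → ℝ
  | 0 => x
  | k + 1 =>
      let xk := X a b x k
      let d : ℕ := (⌊1 / xk⌋).toNat + 1
      ((b k d : ℝ) / (a k d : ℝ)) * (xk - 1 / (d : ℝ))

/-- The digit `d_{k+1}(x) = ⌊1/x_{k+1}⌋ + 1` of the restricted Oppenheim expansion. -/
noncomputable def D (a b : ℕ → ℕ → ℕ) (x : ℝ) (k : ℕ) : ℕ :=
  (⌊1 / X a b x k⌋).toNat + 1

/-- The restricted Oppenheim expansion of `x` is infinite: all `x_n` lie in `(0,1)`. -/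
def InfiniteROE (a b : ℕ → ℕ → ℕ) (x : ℝ) : Prop :=
  ∀ k, X a b x k ∈ Set.Ioo (0 : ℝ) 1

/-- The finite sequence `(j 0, …, j (n-1))` (the paper's `(j_1, …, j_n)`) is admissible:
`j_1 ≥ 2` and `j_{i+1} > h_i(j_i)`.  Here `h i` corresponds to the paper's `h_{i+1}`. -/
def Admissible (h : ℕ → ℕ → ℕ) (n : ℕ) (j : ℕ → ℕ) : Prop :=
  2 ≤ j 0 ∧ ∀ i, i + 1 < n → h i (j i) < j (i + 1)

/-- The cylinder of rank `n` with base `(j 0, …, j (n-1))`: the set of `x ∈ (0,1)` with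
infinite ROE whose first `n` digits are `j 0, …, j (n-1)`. -/
def cylinder (a b : ℕ → ℕ → ℕ) (n : ℕ) (j : ℕ → ℕ) : Set ℝ :=
  {x | x ∈ Set.Ioo (0 : ℝ) 1 ∧ InfiniteROE a b x ∧ ∀ i < n, D a b x i = j i}

/-- The difference-ROE digit `α_{k+1}(x)`: `α₁ = d₁ - 1`, `α_{k+2} = d_{k+2} - h_{k+1}(d_{k+1})`. -/
noncomputable def alpha (a b h : ℕ → ℕ → ℕ) (x : ℝ) : ℕ → ℕ
  | 0 => D a b x 0 - 1
  | k + 1 => D a b x (k + 1) - h k (D a b x k)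

/-- The digit sequence `d` reconstructed from a sequence `α` of difference-ROE symbols:
`d₁ = α₁ + 1`, `d_{k+2} = h_{k+1}(d_{k+1}) + α_{k+2}`. -/
def dSeq (h : ℕ → ℕ → ℕ) (α : ℕ → ℕ) : ℕ → ℕ
  | 0 => α 0 + 1
  | k + 1 => h k (dSeq h α k) + α (k + 1)

/-- The real number whose difference-ROE digits are `(α k)`:
`Φ(α) = Σ_{n≥1} (∏_{i=1}^{n-1} a_i(d_i)/b_i(d_i)) · (1/d_n)`. -/
noncomputable def Phi (a b h : ℕ → ℕ → ℕ) (α : ℕ → ℕ) : ℝ :=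
  ∑' n : ℕ, (∏ i ∈ Finset.range n, (a i (dSeq h α i) : ℝ) / (b i (dSeq h α i) : ℝ)) *
    (1 / (dSeq h α n : ℝ))

/-- The Silvester expansion is the ROE with `a_n ≡ 1` and `b_n ≡ 1`, for which
`h_n(j) = j(j-1)`;  `Φ_S(α) = Σ_{n≥1} 1/d_n` where `d₁ = α₁ + 1` and
`d_{k+1} = d_k(d_k - 1) + α_{k+1}`. -/
def silvesterA : ℕ → ℕ → ℕ := fun _ _ => 1

def silvesterB : ℕ → ℕ → ℕ := fun _ _ => 1

def silvesterH : ℕ → ℕ → ℕ := fun _ j => j * (j - 1)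

noncomputable def PhiS : (ℕ → ℕ) → ℝ := Phi silvesterA silvesterB silvesterH



/-- digit chain starting at `m` with increments `α`. -/
def eS (m : ℕ) (α : ℕ → ℕ) : ℕ → ℕ
  | 0 => m
  | n + 1 => eS m α n * (eS m α n - 1) + α n

def shf (α : ℕ → ℕ) : ℕ → ℕ := fun i => α (i + 1)

lemma eS_shf (m : ℕ) (α : ℕ → ℕ) (n : ℕ) :
    eS (m * (m - 1) + α 0) (shf α) n = eS m α (n + 1) := by
  induction n with
  | zero => rfl
  | succ n ih => simp only [eS, ih, shf]

lemma eS_ge {m : ℕ} (hm : 2 ≤ m) {α : ℕ → ℕ} (hα : ∀ i, 1 ≤ α i) (n : ℕ) :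
    2 ^ n + 1 ≤ eS m α n := by
  induction n with
  | zero => simpa [eS] using hm
  | succ n ih =>
    have h1 : 2 ^ n ≤ eS m α n - 1 := by omega
    have h2 : (2 ^ n + 1) * 2 ^ n ≤ eS m α n * (eS m α n - 1) :=
      Nat.mul_le_mul ih h1
    have h3 : 2 ^ (n + 1) ≤ (2 ^ n + 1) * 2 ^ n := by
      have : 1 ≤ 2 ^ n := Nat.one_le_two_pow
      calc 2 ^ (n + 1) = 2 * 2 ^ n := by ring
        _ ≤ (2 ^ n + 1) * 2 ^ n := by
            apply Nat.mul_le_mul_right; omega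
    have := hα n
    show 2 ^ (n + 1) + 1 ≤ eS m α n * (eS m α n - 1) + α n
    omega

lemma eS_two_le {m : ℕ} (hm : 2 ≤ m) {α : ℕ → ℕ} (hα : ∀ i, 1 ≤ α i) (n : ℕ) :
    2 ≤ eS m α n := by
  have := eS_ge hm hα n
  have : 1 ≤ 2 ^ n := Nat.one_le_two_pow
  omega

lemma summable_eS {m : ℕ} (hm : 2 ≤ m) {α : ℕ → ℕ} (hα : ∀ i, 1 ≤ α i) :
    Summable (fun n => 1 / (eS m α n : ℝ)) := by
  have hgeom : Summable (fun n : ℕ => (1/2 : ℝ) ^ n) :=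
    summable_geometric_of_lt_one (by norm_num) (by norm_num)
  refine Summable.of_nonneg_of_le (fun n => by positivity) (fun n => ?_) hgeom
  have h2 : (2 : ℝ) ^ n ≤ (eS m α n : ℝ) := by
    exact_mod_cast le_trans (by omega : 2 ^ n ≤ 2 ^ n + 1) (eS_ge hm hα n)
  have hp : (0:ℝ) < 2 ^ n := by positivity
  calc (1 : ℝ) / (eS m α n : ℝ) ≤ 1 / 2 ^ n := one_div_le_one_div_of_le hp h2
    _ = (1/2 : ℝ) ^ n := by rw [one_div_pow]

noncomputable def tS (m : ℕ) (α : ℕ → ℕ) : ℝ := ∑' n, 1 / (eS m α n : ℝ)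

lemma tS_succ {m : ℕ} (hm : 2 ≤ m) {α : ℕ → ℕ} (hα : ∀ i, 1 ≤ α i) :
    tS m α = 1 / (m : ℝ) + tS (m * (m - 1) + α 0) (shf α) := by
  rw [tS, Summable.tsum_eq_zero_add (summable_eS hm hα)]
  congr 1
  rw [tS]
  exact tsum_congr fun n => by rw [eS_shf]

lemma two_le_next {m : ℕ} (hm : 2 ≤ m) {j : ℕ} (hj : 1 ≤ j) : 2 ≤ m * (m - 1) + j := by
  have : 2 ≤ m * (m - 1) := by
    have : 2 * 1 ≤ m * (m - 1) := Nat.mul_le_mul hm (by omega)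
    omega
  omega

lemma shf_ge {α : ℕ → ℕ} (hα : ∀ i, 1 ≤ α i) : ∀ i, 1 ≤ shf α i := fun i => hα (i + 1)

lemma sum_range_eS_le : ∀ (N m : ℕ) (α : ℕ → ℕ), 2 ≤ m → (∀ i, 1 ≤ α i) →
    ∑ n ∈ Finset.range N, 1 / (eS m α n : ℝ) ≤ 1 / ((m : ℝ) - 1) := by
  intro N
  induction N with
  | zero =>
    intro m α hm hα
    simp only [Finset.range_zero, Finset.sum_empty]
    have : (1:ℝ) ≤ (m:ℝ) - 1 := by
      have : (2:ℝ) ≤ (m:ℝ) := by exact_mod_cast hm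
      linarith
    positivity
  | succ N ih =>
    intro m α hm hα
    rw [Finset.sum_range_succ']
    have hms : 2 ≤ m * (m - 1) + α 0 := two_le_next hm (hα 0)
    have hrw : ∀ n, (1 : ℝ) / (eS m α (n + 1) : ℝ) = 1 / (eS (m * (m - 1) + α 0) (shf α) n : ℝ) :=
      fun n => by rw [eS_shf]
    have h1 : ∑ n ∈ Finset.range N, 1 / (eS m α (n + 1) : ℝ)
        ≤ 1 / ((↑(m * (m - 1) + α 0) : ℝ) - 1) := by
      calc ∑ n ∈ Finset.range N, 1 / (eS m α (n + 1) : ℝ)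
          = ∑ n ∈ Finset.range N, 1 / (eS (m * (m - 1) + α 0) (shf α) n : ℝ) :=
            Finset.sum_congr rfl fun n _ => hrw n
        _ ≤ _ := ih _ _ hms (shf_ge hα)
    have hm1 : (1:ℝ) ≤ (m:ℝ) - 1 := by
      have : (2:ℝ) ≤ (m:ℝ) := by exact_mod_cast hm
      linarith
    have hmR : (2:ℝ) ≤ (m:ℝ) := by exact_mod_cast hm
    have hcast : ((↑(m * (m - 1) + α 0) : ℝ)) - 1 ≥ (m:ℝ) * ((m:ℝ) - 1) := by
      have h0 : 1 ≤ α 0 := hα 0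
      have : ((m * (m - 1) + α 0 : ℕ) : ℝ) = (m:ℝ) * ((m:ℝ) - 1) + (α 0 : ℝ) := by
        push_cast [Nat.cast_sub (by omega : 1 ≤ m)]
        ring
      rw [this]
      have : (1:ℝ) ≤ (α 0 : ℝ) := by exact_mod_cast h0
      linarith
    have hpos : (0:ℝ) < (m:ℝ) * ((m:ℝ) - 1) := by nlinarith
    have h2 : (1:ℝ) / ((↑(m * (m - 1) + α 0) : ℝ) - 1) ≤ 1 / ((m:ℝ) * ((m:ℝ) - 1)) :=
      one_div_le_one_div_of_le hpos hcast
    have h3 : (1:ℝ) / ((m:ℝ) * ((m:ℝ) - 1)) + 1 / (m:ℝ) = 1 / ((m:ℝ) - 1) := by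
      field_simp
      ring
    have : (1:ℝ) / (eS m α 0 : ℝ) = 1 / (m:ℝ) := by rfl
    rw [this]
    linarith

lemma tS_le {m : ℕ} (hm : 2 ≤ m) {α : ℕ → ℕ} (hα : ∀ i, 1 ≤ α i) :
    tS m α ≤ 1 / ((m : ℝ) - 1) :=
  Summable.tsum_le_of_sum_range_le (summable_eS hm hα) fun N => sum_range_eS_le N m α hm hα

lemma le_tS {m : ℕ} (hm : 2 ≤ m) {α : ℕ → ℕ} (hα : ∀ i, 1 ≤ α i) :
    1 / (m : ℝ) ≤ tS m α := by
  have := Summable.le_tsum (summable_eS hm hα) 0 (fun j _ => by positivity)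
  simpa [tS, eS] using this

lemma hasSum_telescope {h : ℕ} (hh : 1 ≤ h) :
    HasSum (fun j : ℕ => 1 / (((h : ℝ) + j) * ((h : ℝ) + j + 1))) (1 / (h : ℝ)) := by
  have hhR : (1:ℝ) ≤ (h:ℝ) := by exact_mod_cast hh
  rw [hasSum_iff_tendsto_nat_of_nonneg (fun j => by positivity)]
  have hterm : ∀ j : ℕ, (1:ℝ) / (((h : ℝ) + j) * ((h : ℝ) + j + 1))
      = 1 / ((h:ℝ) + j) - 1 / ((h:ℝ) + j + 1) := by
    intro j
    have p1 : (0:ℝ) < (h:ℝ) + j := by positivity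
    have p2 : (0:ℝ) < (h:ℝ) + j + 1 := by positivity
    rw [div_sub_div _ _ (ne_of_gt p1) (ne_of_gt p2)]
    congr 1
    ring
  have hsum : ∀ N : ℕ, ∑ j ∈ Finset.range N, 1 / (((h : ℝ) + j) * ((h : ℝ) + j + 1))
      = 1 / (h:ℝ) - 1 / ((h:ℝ) + N) := by
    intro N
    have := Finset.sum_range_sub' (f := fun j : ℕ => 1 / ((h:ℝ) + j)) (n := N)
    simp only [Nat.cast_zero, add_zero] at this
    rw [← this]
    refine Finset.sum_congr rfl fun j _ => ?_
    rw [hterm j, show ((h:ℝ) + ((j:ℕ)+1 : ℕ)) = (h:ℝ) + j + 1 by push_cast; ring]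
  simp only [hsum]
  have h0 : Tendsto (fun N : ℕ => 1 / ((h:ℝ) + N)) atTop (nhds 0) := by
    have ht : Tendsto (fun N : ℕ => (h:ℝ) + N) atTop atTop :=
      tendsto_atTop_add_const_left _ _ tendsto_natCast_atTop_atTop
    have hinv : Tendsto (fun N : ℕ => ((h:ℝ) + N)⁻¹) atTop (nhds 0) := ht.inv_tendsto_atTop
    simpa [one_div] using hinv
  simpa using tendsto_const_nhds.sub h0

/-- the set of values of `tS m` on sequences with all entries ≥ 1 whose `k`-th entry is `c`. -/
def ESet (c k m : ℕ) : Set ℝ := tS m '' {α | (∀ i, 1 ≤ α i) ∧ α k = c}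

lemma ESet_zero_subset {c m : ℕ} (hm : 2 ≤ m) :
    ESet c 0 m ⊆ Icc (1/(m:ℝ) + 1/((m*(m-1)+c : ℕ):ℝ))
      (1/(m:ℝ) + 1/(((m*(m-1)+c : ℕ):ℝ) - 1)) := by
  rintro x ⟨α, ⟨hα, h0⟩, rfl⟩
  have hms : 2 ≤ m*(m-1) + c := by
    rw [← h0]; exact two_le_next hm (hα 0)
  rw [tS_succ hm hα, h0]
  constructor
  · exact add_le_add_right (le_tS hms (shf_ge hα)) _
  · exact add_le_add_right (tS_le hms (shf_ge hα)) _

lemma one_div_sub_one_div' {a : ℝ} (ha : 1 < a) :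
    1/(a-1) - 1/a = 1/(a*(a-1)) := by
  have h1 : a - 1 ≠ 0 := by linarith
  have h2 : a ≠ 0 := by linarith
  rw [div_sub_div _ _ h1 h2, show (1*a - (a-1)*1 : ℝ) = 1 from by ring, mul_comm (a-1) a]

lemma ESet_vol {c : ℕ} (hc : 1 ≤ c) : ∀ k m, 2 ≤ m →
    volume (ESet c k m) ≤
      ENNReal.ofReal ((1/2)^k * (1 / ((↑(m*(m-1)) : ℝ) * ((↑(m*(m-1)) : ℝ) + 1)))) := by
  intro k
  induction k with
  | zero =>
    intro m hm
    have hhn : 2 ≤ m * (m - 1) := by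
      have : 2 * 1 ≤ m * (m - 1) := Nat.mul_le_mul hm (by omega)
      omega
    have hh2 : (2:ℝ) ≤ (↑(m*(m-1)) : ℝ) := by exact_mod_cast hhn
    have hcR : (1:ℝ) ≤ (c:ℝ) := by exact_mod_cast hc
    have heq : ((m*(m-1)+c : ℕ):ℝ) = (↑(m*(m-1)) : ℝ) + (c:ℝ) := by push_cast; ring
    calc volume (ESet c 0 m) ≤ volume (Icc (1/(m:ℝ) + 1/((m*(m-1)+c : ℕ):ℝ))
          (1/(m:ℝ) + 1/(((m*(m-1)+c : ℕ):ℝ) - 1))) := measure_mono (ESet_zero_subset hm)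
      _ ≤ ENNReal.ofReal ((1/2)^0 * (1 / ((↑(m*(m-1)) : ℝ) * ((↑(m*(m-1)) : ℝ) + 1)))) := by
          rw [Real.volume_Icc]
          apply ENNReal.ofReal_le_ofReal
          have he1 : (↑(m*(m-1)) : ℝ) + 1 ≤ ((m*(m-1)+c : ℕ):ℝ) := by rw [heq]; linarith
          have hepos : (0:ℝ) < ((m*(m-1)+c : ℕ):ℝ) - 1 := by linarith
          have hepos2 : (0:ℝ) < ((m*(m-1)+c : ℕ):ℝ) := by linarith
          have hd : 1/(m:ℝ) + 1/(((m*(m-1)+c : ℕ):ℝ) - 1)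
              - (1/(m:ℝ) + 1/((m*(m-1)+c : ℕ):ℝ))
              = 1 / (((m*(m-1)+c : ℕ):ℝ) * (((m*(m-1)+c : ℕ):ℝ) - 1)) := by
            rw [show 1/(m:ℝ) + 1/(((m*(m-1)+c : ℕ):ℝ) - 1)
              - (1/(m:ℝ) + 1/((m*(m-1)+c : ℕ):ℝ))
              = 1/(((m*(m-1)+c : ℕ):ℝ) - 1) - 1/((m*(m-1)+c : ℕ):ℝ) by ring]
            exact one_div_sub_one_div' (by linarith)
          rw [hd]
          simp only [pow_zero, one_mul]
          apply one_div_le_one_div_of_le (by positivity)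
          nlinarith
  | succ k ih =>
    intro m hm
    have hhn : 2 ≤ m * (m - 1) := by
      have : 2 * 1 ≤ m * (m - 1) := Nat.mul_le_mul hm (by omega)
      omega
    have hh2 : (2:ℝ) ≤ (↑(m*(m-1)) : ℝ) := by exact_mod_cast hhn
    have hhpos : (0:ℝ) < (↑(m*(m-1)) : ℝ) := by linarith
    have hsub : ESet c (k+1) m ⊆ ⋃ j : ℕ, ((1/(m:ℝ)) +ᵥ ESet c k (m*(m-1) + j + 1)) := by
      rintro x ⟨α, ⟨hα, hk⟩, rfl⟩
      refine mem_iUnion.2 ⟨α 0 - 1, ?_⟩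
      have hidx : m*(m-1) + (α 0 - 1) + 1 = m*(m-1) + α 0 := by have := hα 0; omega
      rw [hidx]
      refine Set.mem_vadd_set.2 ⟨tS (m*(m-1) + α 0) (shf α), ⟨shf α, ⟨shf_ge hα, hk⟩, rfl⟩, ?_⟩
      rw [vadd_eq_add, ← tS_succ hm hα]
    -- the dominating summable series
    have hc2 : (0:ℝ) ≤ (1/2)^k * (1 / ((↑(m*(m-1)) : ℝ) * ((↑(m*(m-1)) : ℝ) + 1))) := by
      positivity
    have htel := (hasSum_telescope (h := m*(m-1)) (by omega)).mul_left
      ((1/2)^k * (1 / ((↑(m*(m-1)) : ℝ) * ((↑(m*(m-1)) : ℝ) + 1))))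
    -- termwise bound
    have hterm : ∀ j : ℕ, volume (ESet c k (m*(m-1) + j + 1))
        ≤ ENNReal.ofReal (((1/2)^k * (1 / ((↑(m*(m-1)) : ℝ) * ((↑(m*(m-1)) : ℝ) + 1)))) *
            (1 / (((↑(m*(m-1)) : ℝ) + j) * ((↑(m*(m-1)) : ℝ) + j + 1)))) := by
      intro j
      refine (ih (m*(m-1) + j + 1) (by omega)).trans (ENNReal.ofReal_le_ofReal ?_)
      -- real inequality
      have hA : ((m*(m-1) + j + 1) * ((m*(m-1) + j + 1) - 1) : ℕ)
          = (m*(m-1) + j + 1) * (m*(m-1) + j) := by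
        rw [show (m*(m-1) + j + 1) - 1 = m*(m-1) + j from by omega]
      have hnat : (m*(m-1)) * ((m*(m-1)) + 1) * ((m*(m-1) + j) * (m*(m-1) + j + 1))
          ≤ ((m*(m-1) + j + 1) * (m*(m-1) + j)) * ((m*(m-1) + j + 1) * (m*(m-1) + j) + 1) := by
        have h1 : (m*(m-1)) * ((m*(m-1)) + 1) ≤ (m*(m-1) + j + 1) * (m*(m-1) + j) + 1 := by
          nlinarith
        have h2 : (m*(m-1) + j) * (m*(m-1) + j + 1) ≤ (m*(m-1) + j + 1) * (m*(m-1) + j) :=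
          le_of_eq (mul_comm _ _)
        calc (m*(m-1)) * ((m*(m-1)) + 1) * ((m*(m-1) + j) * (m*(m-1) + j + 1))
            ≤ ((m*(m-1) + j + 1) * (m*(m-1) + j) + 1) * ((m*(m-1) + j + 1) * (m*(m-1) + j)) :=
              Nat.mul_le_mul h1 h2
          _ = ((m*(m-1) + j + 1) * (m*(m-1) + j)) * ((m*(m-1) + j + 1) * (m*(m-1) + j) + 1) := by
              ring
      have hR : ((↑(m*(m-1)) : ℝ) * ((↑(m*(m-1)) : ℝ) + 1)) *
            (((↑(m*(m-1)) : ℝ) + j) * ((↑(m*(m-1)) : ℝ) + j + 1))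
          ≤ (↑((m*(m-1) + j + 1) * ((m*(m-1) + j + 1) - 1)) : ℝ) *
            ((↑((m*(m-1) + j + 1) * ((m*(m-1) + j + 1) - 1)) : ℝ) + 1) := by
        rw [hA]
        exact_mod_cast hnat
      have hpos1 : (0:ℝ) < (↑((m*(m-1) + j + 1) * ((m*(m-1) + j + 1) - 1)) : ℝ) *
          ((↑((m*(m-1) + j + 1) * ((m*(m-1) + j + 1) - 1)) : ℝ) + 1) := by
        rw [hA]
        have : 0 < (m*(m-1) + j + 1) * (m*(m-1) + j) := by positivity
        have h0 : (0:ℝ) < (↑((m*(m-1) + j + 1) * (m*(m-1) + j)) : ℝ) := by exact_mod_cast this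
        nlinarith
      have hp2 : (0:ℝ) < ((↑(m*(m-1)) : ℝ) * ((↑(m*(m-1)) : ℝ) + 1)) *
          (((↑(m*(m-1)) : ℝ) + j) * ((↑(m*(m-1)) : ℝ) + j + 1)) := by positivity
      have := one_div_le_one_div_of_le hp2 hR
      calc (1/2:ℝ)^k * (1 / ((↑((m*(m-1) + j + 1) * ((m*(m-1) + j + 1) - 1)) : ℝ) *
              ((↑((m*(m-1) + j + 1) * ((m*(m-1) + j + 1) - 1)) : ℝ) + 1)))
          ≤ (1/2:ℝ)^k * (1 / (((↑(m*(m-1)) : ℝ) * ((↑(m*(m-1)) : ℝ) + 1)) *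
              (((↑(m*(m-1)) : ℝ) + j) * ((↑(m*(m-1)) : ℝ) + j + 1)))) := by
            apply mul_le_mul_of_nonneg_left _ (by positivity)
            exact one_div_le_one_div_of_le hp2 hR
        _ = ((1/2:ℝ)^k * (1 / ((↑(m*(m-1)) : ℝ) * ((↑(m*(m-1)) : ℝ) + 1)))) *
              (1 / (((↑(m*(m-1)) : ℝ) + j) * ((↑(m*(m-1)) : ℝ) + j + 1))) := by
            simp only [one_div, mul_inv]
            ring
    calc volume (ESet c (k+1) m)
        ≤ ∑' j : ℕ, volume ((1/(m:ℝ)) +ᵥ ESet c k (m*(m-1) + j + 1)) :=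
          (measure_mono hsub).trans (measure_iUnion_le _)
      _ = ∑' j : ℕ, volume (ESet c k (m*(m-1) + j + 1)) := by
          exact tsum_congr fun j => measure_vadd _ _ _
      _ ≤ ∑' j : ℕ, ENNReal.ofReal (((1/2)^k * (1 / ((↑(m*(m-1)) : ℝ) * ((↑(m*(m-1)) : ℝ) + 1)))) *
            (1 / (((↑(m*(m-1)) : ℝ) + j) * ((↑(m*(m-1)) : ℝ) + j + 1)))) :=
          ENNReal.tsum_le_tsum hterm
      _ = ENNReal.ofReal (((1/2)^k * (1 / ((↑(m*(m-1)) : ℝ) * ((↑(m*(m-1)) : ℝ) + 1)))) *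
            (1 / (↑(m*(m-1)) : ℝ))) := by
          rw [← ENNReal.ofReal_tsum_of_nonneg (fun j => by positivity) htel.summable]
          rw [htel.tsum_eq]
      _ ≤ ENNReal.ofReal ((1/2)^(k+1) * (1 / ((↑(m*(m-1)) : ℝ) * ((↑(m*(m-1)) : ℝ) + 1)))) := by
          apply ENNReal.ofReal_le_ofReal
          have h12 : 1 / (↑(m*(m-1)) : ℝ) ≤ 1/2 := by
            apply one_div_le_one_div_of_le (by norm_num) hh2
          calc ((1/2:ℝ)^k * (1 / ((↑(m*(m-1)) : ℝ) * ((↑(m*(m-1)) : ℝ) + 1)))) *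
                (1 / (↑(m*(m-1)) : ℝ))
              ≤ ((1/2:ℝ)^k * (1 / ((↑(m*(m-1)) : ℝ) * ((↑(m*(m-1)) : ℝ) + 1)))) * (1/2) :=
                mul_le_mul_of_nonneg_left h12 hc2
            _ = (1/2:ℝ)^(k+1) * (1 / ((↑(m*(m-1)) : ℝ) * ((↑(m*(m-1)) : ℝ) + 1))) := by ring




lemma dSeq_eq_eS (α : ℕ → ℕ) : ∀ n, dSeq silvesterH α n = eS (α 0 + 1) (shf α) n := by
  intro n
  induction n with
  | zero => rfl
  | succ n ih => simp only [dSeq, eS, silvesterH, shf, ih]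

lemma PhiS_eq (α : ℕ → ℕ) : PhiS α = tS (α 0 + 1) (shf α) := by
  rw [PhiS, Phi, tS]
  refine tsum_congr fun n => ?_
  simp only [silvesterA, silvesterB, Nat.cast_one, div_one, Finset.prod_const_one, one_mul,
    dSeq_eq_eS]

/-- image under `PhiS` of positive sequences with `n`-th entry `c`. -/
def EnS (c n : ℕ) : Set ℝ := PhiS '' {α | (∀ i, 1 ≤ α i) ∧ α n = c}

lemma EnS_subset (c n : ℕ) : EnS c (n+1) ⊆ ⋃ j : ℕ, ESet c n (j + 2) := by
  rintro x ⟨α, ⟨hα, hk⟩, rfl⟩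
  refine mem_iUnion.2 ⟨α 0 - 1, ?_⟩
  have h2 : α 0 - 1 + 2 = α 0 + 1 := by have := hα 0; omega
  rw [PhiS_eq, h2]
  exact ⟨shf α, ⟨shf_ge hα, hk⟩, rfl⟩

lemma EnS_vol {c : ℕ} (hc : 1 ≤ c) (n : ℕ) :
    volume (EnS c (n+1)) ≤ ENNReal.ofReal ((1/2 : ℝ)^n) := by
  have htel := (hasSum_telescope (h := 1) le_rfl).mul_left ((1/2 : ℝ)^n)
  simp only [Nat.cast_one] at htel
  have hterm : ∀ j : ℕ, volume (ESet c n (j + 2))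
      ≤ ENNReal.ofReal ((1/2 : ℝ)^n * (1 / (((1:ℝ) + j) * ((1:ℝ) + j + 1)))) := by
    intro j
    refine (ESet_vol hc n (j+2) (by omega)).trans (ENNReal.ofReal_le_ofReal ?_)
    apply mul_le_mul_of_nonneg_left _ (by positivity)
    have hA : ((j+2) * ((j+2) - 1) : ℕ) = (j+2) * (j+1) := by
      rw [show (j+2) - 1 = j+1 from by omega]
    have hnat : (1 + j) * (1 + j + 1) ≤ ((j+2)*(j+1)) * ((j+2)*(j+1) + 1) := by
      have h1 : (1 + j) * (1 + j + 1) = (j+2)*(j+1) := by ring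
      rw [h1]
      exact Nat.le_mul_of_pos_right _ (by omega)
    have hR : ((1:ℝ) + j) * ((1:ℝ) + j + 1)
        ≤ (↑((j+2) * ((j+2) - 1)) : ℝ) * ((↑((j+2) * ((j+2) - 1)) : ℝ) + 1) := by
      rw [hA]
      have : (((1 + j) * (1 + j + 1) : ℕ) : ℝ) ≤ ((((j+2)*(j+1)) * ((j+2)*(j+1) + 1) : ℕ) : ℝ) := by
        exact_mod_cast hnat
      push_cast at this ⊢
      nlinarith [this]
    exact one_div_le_one_div_of_le (by positivity) hR
  calc volume (EnS c (n+1)) ≤ ∑' j : ℕ, volume (ESet c n (j + 2)) :=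
        (measure_mono (EnS_subset c n)).trans (measure_iUnion_le _)
    _ ≤ ∑' j : ℕ, ENNReal.ofReal ((1/2 : ℝ)^n * (1 / (((1:ℝ) + j) * ((1:ℝ) + j + 1)))) :=
        ENNReal.tsum_le_tsum hterm
    _ = ENNReal.ofReal ((1/2 : ℝ)^n * (1 / (1:ℝ))) := by
        rw [← ENNReal.ofReal_tsum_of_nonneg (fun j => by positivity) htel.summable]
        rw [htel.tsum_eq]
    _ = ENNReal.ofReal ((1/2 : ℝ)^n) := by norm_num

lemma vol_limsup_EnS {c : ℕ} (hc : 1 ≤ c) :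
    volume (limsup (fun n => EnS c (n+1)) atTop) = 0 := by
  apply measure_limsup_atTop_eq_zero
  have h1 : ∑' n : ℕ, volume (EnS c (n+1)) ≤ ∑' n : ℕ, ENNReal.ofReal ((1/2 : ℝ)^n) :=
    ENNReal.tsum_le_tsum (EnS_vol hc)
  have h2 : ∑' n : ℕ, ENNReal.ofReal ((1/2 : ℝ)^n) = ENNReal.ofReal (∑' n : ℕ, (1/2 : ℝ)^n) :=
    (ENNReal.ofReal_tsum_of_nonneg (fun n => by positivity)
      (summable_geometric_of_lt_one (by norm_num) (by norm_num))).symm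
  rw [h2] at h1
  exact ne_top_of_le_ne_top ENNReal.ofReal_ne_top h1

lemma measurable_dSeq (n : ℕ) : Measurable (fun α : ℕ → ℕ => dSeq silvesterH α n) := by
  induction n with
  | zero => exact (measurable_pi_apply 0 : Measurable fun α : ℕ → ℕ => α 0).add measurable_const
  | succ n ih =>
    have h : (fun α : ℕ → ℕ => dSeq silvesterH α (n+1)) =
        (fun q : ℕ × ℕ => silvesterH n q.1 + q.2) ∘
          (fun α => (dSeq silvesterH α n, α (n+1))) := rfl
    rw [h]
    exact (measurable_of_countable _).comp (ih.prodMk (measurable_pi_apply _))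

lemma measurable_PhiS : Measurable PhiS := by
  have hfun : PhiS = fun α => (∑' n, ENNReal.ofReal (1 / (dSeq silvesterH α n : ℝ))).toReal := by
    funext α
    have hPhi : PhiS α = ∑' n, (1 : ℝ) / (dSeq silvesterH α n : ℝ) := by
      rw [PhiS, Phi]
      exact tsum_congr fun n => by simp [silvesterA, silvesterB]
    rw [hPhi]
    by_cases hS : Summable (fun n => (1:ℝ) / (dSeq silvesterH α n : ℝ))
    · rw [← ENNReal.ofReal_tsum_of_nonneg (fun n => by positivity) hS,
        ENNReal.toReal_ofReal (tsum_nonneg fun n => by positivity)]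
    · rw [tsum_eq_zero_of_not_summable hS]
      have htop : (∑' n, ENNReal.ofReal ((1:ℝ) / (dSeq silvesterH α n : ℝ))) = ⊤ := by
        by_contra h
        apply hS
        refine (ENNReal.summable_toReal h).congr fun n => ?_
        rw [ENNReal.toReal_ofReal (by positivity)]
      rw [htop, ENNReal.toReal_top]
  rw [hfun]
  apply Measurable.ennreal_toReal
  apply Measurable.ennreal_tsum
  intro n
  exact (measurable_of_countable (fun d : ℕ => ENNReal.ofReal (1 / (d : ℝ)))).comp
    (measurable_dSeq n)


/-- If the difference-Silvester symbols are independent and identically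
distributed, with common law a fixed probability measure `p` on the positive integers, then the
distribution `μ_ξ = (Φ_S)_*P` is singular with respect to Lebesgue measure. -/
theorem silvester_singular_of_iid
    (p : Measure ℕ) [IsProbabilityMeasure p] (hp0 : p {0} = 0)
    (P : Measure (ℕ → ℕ)) [IsProbabilityMeasure P]
    (hlaw : ∀ k : ℕ, P.map (fun α => α k) = p)
    (hindep : ProbabilityTheory.iIndepFun
      (fun k (α : ℕ → ℕ) => α k) P) :
    (P.map PhiS).MutuallySingular volume := by
  -- choose a positive integer `c` with positive mass
  have hex : ∃ c : ℕ, 1 ≤ c ∧ p {c} ≠ 0 := by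
    by_contra h
    push_neg at h
    have hall : ∀ c : ℕ, p ({c} : Set ℕ) = 0 := by
      intro c
      rcases Nat.eq_zero_or_pos c with rfl | hcpos
      · exact hp0
      · exact h c hcpos
    have huniv : p (Set.univ : Set ℕ) = 0 := by
      have hU : (Set.univ : Set ℕ) = ⋃ c : ℕ, {c} := by ext x; simp
      rw [hU]
      refine le_antisymm ((measure_iUnion_le _).trans ?_) zero_le
      simp [hall]
    have := (measure_univ : p Set.univ = 1)
    rw [huniv] at this
    exact zero_ne_one this
  obtain ⟨c, hc1, hcpos⟩ := hex
  -- second Borel-Cantelli on the symbol side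
  have hsm : ∀ k, MeasurableSet ((fun α : ℕ → ℕ => α k) ⁻¹' {c}) :=
    fun k => (measurable_pi_apply k) (measurableSet_singleton c)
  have hPs : ∀ k, P ((fun α : ℕ → ℕ => α k) ⁻¹' {c}) = p {c} := fun k => by
    rw [← hlaw k, Measure.map_apply (measurable_pi_apply k) (measurableSet_singleton c)]
  have hiset : ProbabilityTheory.iIndepSet (fun k => (fun α : ℕ → ℕ => α k) ⁻¹' {c}) P := by
    rw [ProbabilityTheory.iIndepSet_iff_meas_biInter hsm]
    intro S
    exact hindep.meas_biInter (fun i _ => ⟨{c}, measurableSet_singleton c, rfl⟩)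
  have hsum : ∑' k, P ((fun α : ℕ → ℕ => α k) ⁻¹' {c}) = ⊤ := by
    rw [tsum_congr hPs]
    exact ENNReal.tsum_const_eq_top_of_ne_zero hcpos
  have hone : P (limsup (fun k => (fun α : ℕ → ℕ => α k) ⁻¹' {c}) atTop) = 1 :=
    ProbabilityTheory.measure_limsup_eq_one hsm hiset hsum
  have hlimm : MeasurableSet (limsup (fun k => (fun α : ℕ → ℕ => α k) ⁻¹' {c}) atTop) := by
    rw [limsup_eq_iInf_iSup_of_nat]
    exact MeasurableSet.iInter fun n => MeasurableSet.iUnion fun i =>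
      MeasurableSet.iUnion fun _ => hsm i
  -- a.s. all symbols are positive
  have hpos0 : ∀ k, P ((fun α : ℕ → ℕ => α k) ⁻¹' {0}) = 0 := by
    intro k
    have h := hp0
    rw [← hlaw k, Measure.map_apply (measurable_pi_apply k) (measurableSet_singleton 0)] at h
    exact h
  have hposset : P {α : ℕ → ℕ | ¬ ∀ i, 1 ≤ α i} = 0 := by
    have hsub : {α : ℕ → ℕ | ¬ ∀ i, 1 ≤ α i} ⊆ ⋃ i, (fun α : ℕ → ℕ => α i) ⁻¹' {0} := by
      intro α hα
      simp only [mem_setOf_eq, not_forall] at hα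
      obtain ⟨i, hi⟩ := hα
      exact mem_iUnion.2 ⟨i, by simp [Nat.lt_one_iff.mp (Nat.lt_of_not_le hi)]⟩
    refine le_antisymm ((measure_mono hsub).trans ((measure_iUnion_le _).trans ?_)) zero_le
    simp [hpos0]
  -- null superset on the real side
  obtain ⟨t, hsub_t, htm, ht0⟩ := exists_measurable_superset_of_null (vol_limsup_EnS hc1)
  refine ⟨tᶜ, htm.compl, ?_, by rwa [compl_compl]⟩
  rw [Measure.map_apply measurable_PhiS htm.compl]
  have hsubset : PhiS ⁻¹' tᶜ ⊆ {α : ℕ → ℕ | ¬ ∀ i, 1 ≤ α i}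
      ∪ (limsup (fun k => (fun α : ℕ → ℕ => α k) ⁻¹' {c}) atTop)ᶜ := by
    intro α hα
    by_contra hcon
    simp only [mem_union, mem_setOf_eq, mem_compl_iff, not_or, not_not] at hcon
    obtain ⟨h1, h2⟩ := hcon
    apply hα
    apply hsub_t
    rw [mem_limsup_iff_frequently_mem, frequently_atTop]
    have hfreq := (mem_limsup_iff_frequently_mem.1 h2)
    rw [frequently_atTop] at hfreq
    intro N
    obtain ⟨k, hkN, hk⟩ := hfreq (N + 1)
    refine ⟨k - 1, by omega, ?_⟩
    have hkk : k - 1 + 1 = k := by omega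
    rw [hkk]
    exact ⟨α, ⟨h1, hk⟩, rfl⟩
  have hcompl : P ((limsup (fun k => (fun α : ℕ → ℕ => α k) ⁻¹' {c}) atTop)ᶜ) = 0 :=
    (prob_compl_eq_zero_iff hlimm).2 hone
  refine le_antisymm ((measure_mono hsubset).trans ((measure_union_le _ _).trans ?_)) zero_le
  rw [hposset, hcompl, add_zero]

end ROE
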